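/- For q ∈ (0, 1/2), the function g(r) = h₂(r ∗ q) − h₂(r) is strictly convex on [0, 1/2]. -/

import Mathlib

/-- Binary convolution `a ∗ b = a(1-b) + b(1-a)`. -/
noncomputable def bconv (a b : ℝ) : ℝ := a * (1 - b) + b * (1 - a)

/-- Binary entropy (base 2), with the convention `0 · log 0 = 0`. -/
noncomputable def h2 (x : ℝ) : ℝ := -x * Real.logb 2 x - (1 - x) * Real.logb 2 (1 - x)

open Real Set

lemma h2_eq (x : ℝ) : h2 x = (-(x * Real.log x) - (1-x) * Real.log (1-x)) / Real.log 2 := by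
  simp only [h2, Real.logb, div_eq_mul_inv, sub_div]
  ring

lemma hasDerivAt_H {x : ℝ} (hx : x ∈ Ioo (0:ℝ) 1) :
    HasDerivAt (fun y => -(y * Real.log y) - (1-y) * Real.log (1-y))
      (Real.log (1-x) - Real.log x) x := by
  have h1 : HasDerivAt (fun y : ℝ => y * Real.log y) (Real.log x + 1) x :=
    Real.hasDerivAt_mul_log (ne_of_gt hx.1)
  have h2 : HasDerivAt (fun y : ℝ => (1-y) * Real.log (1-y)) (-(Real.log (1-x) + 1)) x := by
    have h3 : HasDerivAt (fun y : ℝ => (1:ℝ) - y) (-1) x := by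
      simpa using (hasDerivAt_id x).const_sub (1:ℝ)
    have := (Real.hasDerivAt_mul_log (x := 1 - x) (by nlinarith [hx.2])).comp x h3
    simpa [Function.comp_def] using this
  have : HasDerivAt (fun y => -(y * Real.log y) - (1-y) * Real.log (1-y)) _ x := h1.neg.sub h2
  convert this using 1
  ring

theorem stmt2 (q : ℝ) (hq : q ∈ Set.Ioo (0:ℝ) (1/2)) :
    StrictConvexOn ℝ (Set.Icc (0:ℝ) (1/2)) (fun r => h2 (bconv r q) - h2 r) := by
  obtain ⟨hq0, hq2⟩ := hq
  set c : ℝ := 1 - 2*q with hc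
  have hc0 : 0 < c := by simp [hc]; linarith
  have hc1 : c < 1 := by simp [hc]; linarith
  have hlog2 : 0 < Real.log 2 := Real.log_pos (by norm_num)
  -- rewrite the function
  have hBval : ∀ r : ℝ, bconv r q = q + c * r := by
    intro r; simp [bconv, hc]; ring
  set H : ℝ → ℝ := fun y => -(y * Real.log y) - (1-y) * Real.log (1-y) with hH
  have hfun : (fun r => h2 (bconv r q) - h2 r) = fun r => (H (bconv r q) - H r) / Real.log 2 := by
    funext r
    simp only [hH]
    rw [h2_eq, h2_eq]
    ring
  rw [hfun]
  set F : ℝ → ℝ := fun r => (H (bconv r q) - H r) / Real.log 2 with hF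
  -- membership facts
  have hBmem : ∀ x ∈ Ioo (0:ℝ) (1/2), bconv x q ∈ Ioo (0:ℝ) (1/2) := by
    intro x hx
    rw [hBval]
    constructor
    · nlinarith [hx.1]
    · nlinarith [hx.2]
  -- continuity
  have hHcont : Continuous H := by
    have h1 : Continuous fun y : ℝ => y * Real.log y := Real.continuous_mul_log
    have h2 : Continuous fun y : ℝ => (1-y) * Real.log (1-y) :=
      h1.comp (continuous_const.sub continuous_id)
    exact (h1.neg).sub h2
  have hBcont : Continuous fun r : ℝ => bconv r q := by
    simp only [bconv]; fun_prop
  have hFcont : ContinuousOn F (Icc (0:ℝ) (1/2)) := by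
    apply Continuous.continuousOn
    exact ((hHcont.comp hBcont).sub hHcont).div_const _
  -- first derivative
  set G1 : ℝ → ℝ := fun r =>
    (c * (Real.log (1 - bconv r q) - Real.log (bconv r q))
      - (Real.log (1-r) - Real.log r)) / Real.log 2 with hG1
  have hBderiv : ∀ x : ℝ, HasDerivAt (fun r => bconv r q) c x := by
    intro x
    have : HasDerivAt (fun r : ℝ => r * (1-q) + q * (1-r)) ((1-q) - q) x := by
      have h1 := (hasDerivAt_id x).mul_const (1-q)
      have h2 : HasDerivAt (fun r : ℝ => q * (1-r)) (-q) x := by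
        have := ((hasDerivAt_const x (1:ℝ)).sub (hasDerivAt_id x)).const_mul q
        simpa using this
      exact (h1.add h2 : HasDerivAt (fun r : ℝ => r * (1-q) + q * (1-r)) _ x).congr_deriv (by ring)
    have hce : c = (1-q) - q := by rw [hc]; ring
    rw [hce]
    simpa only [bconv] using this
  have hF' : ∀ x ∈ Ioo (0:ℝ) (1/2), HasDerivAt F (G1 x) x := by
    intro x hx
    have hx1 : x ∈ Ioo (0:ℝ) 1 := ⟨hx.1, by linarith [hx.2]⟩
    have hs1 : bconv x q ∈ Ioo (0:ℝ) 1 := by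
      have := hBmem x hx; exact ⟨this.1, by linarith [this.2]⟩
    have h1 : HasDerivAt (fun r => H (bconv r q))
        ((Real.log (1 - bconv x q) - Real.log (bconv x q)) * c) x :=
      (hasDerivAt_H hs1).comp (h₂ := H) x (hBderiv x)
    have h2 := hasDerivAt_H hx1
    have : HasDerivAt F (((Real.log (1 - bconv x q) - Real.log (bconv x q)) * c
        - (Real.log (1-x) - Real.log x)) / Real.log 2) x := (h1.sub h2).div_const (Real.log 2)
    convert this using 1
    simp only [hG1]; ring
  -- second derivative of G1
  have hG1' : ∀ x ∈ Ioo (0:ℝ) (1/2), HasDerivAt G1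
      ((c * ((1 - bconv x q)⁻¹ * (-c) - (bconv x q)⁻¹ * c)
        - ((1-x)⁻¹ * (-1) - x⁻¹)) / Real.log 2) x := by
    intro x hx
    have hx1 : x ∈ Ioo (0:ℝ) 1 := ⟨hx.1, by linarith [hx.2]⟩
    have hs1 : bconv x q ∈ Ioo (0:ℝ) 1 := by
      have := hBmem x hx; exact ⟨this.1, by linarith [this.2]⟩
    have hinner : HasDerivAt (fun r => 1 - bconv r q) (-c) x := by
      simpa using (hBderiv x).const_sub (1:ℝ)
    have hd1 : HasDerivAt (fun r => Real.log (1 - bconv r q)) ((1 - bconv x q)⁻¹ * (-c)) x :=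
      (Real.hasDerivAt_log (by linarith [hs1.2])).comp x hinner
    have hd2 : HasDerivAt (fun r => Real.log (bconv r q)) ((bconv x q)⁻¹ * c) x :=
      (Real.hasDerivAt_log (ne_of_gt hs1.1)).comp (h₂ := Real.log) x (hBderiv x)
    have hinner2 : HasDerivAt (fun r : ℝ => 1 - r) (-1 : ℝ) x := by
      simpa using (hasDerivAt_id x).const_sub (1:ℝ)
    have hd3 : HasDerivAt (fun r : ℝ => Real.log (1-r)) ((1-x)⁻¹ * (-1)) x :=
      (Real.hasDerivAt_log (by linarith [hx1.2])).comp x hinner2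
    have hd4 : HasDerivAt (fun r : ℝ => Real.log r) x⁻¹ x :=
      Real.hasDerivAt_log (ne_of_gt hx1.1)
    exact ((((hd1.sub hd2).const_mul c).sub (hd3.sub hd4)).div_const (Real.log 2))
  -- apply the second-derivative criterion
  apply strictConvexOn_of_deriv2_pos (convex_Icc _ _) hFcont
  intro x hx
  rw [interior_Icc] at hx
  have hopen : Ioo (0:ℝ) (1/2) ∈ nhds x := (isOpen_Ioo).mem_nhds hx
  have hderiv_eq : Set.EqOn (deriv F) G1 (Ioo (0:ℝ) (1/2)) := fun y hy => (hF' y hy).deriv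
  have hev : deriv F =ᶠ[nhds x] G1 :=
    Filter.eventuallyEq_of_mem hopen hderiv_eq
  have h2deriv : deriv (deriv F) x = (c * ((1 - bconv x q)⁻¹ * (-c) - (bconv x q)⁻¹ * c)
        - ((1-x)⁻¹ * (-1) - x⁻¹)) / Real.log 2 := by
    rw [hev.deriv_eq]
    exact (hG1' x hx).deriv
  have hit : deriv^[2] F x = deriv (deriv F) x := rfl
  rw [hit, h2deriv]
  -- positivity
  apply div_pos _ hlog2
  set s := bconv x q with hs
  have hs12 := hBmem x hx
  have hx0 := hx.1
  have hx2 := hx.2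
  have hs0 := hs12.1
  have hs2 := hs12.2
  have hx1 : x < 1 := by linarith
  have hs1 : s < 1 := by linarith
  have hxne : x ≠ 0 := ne_of_gt hx0
  have h1xne : (1:ℝ) - x ≠ 0 := by intro h; nlinarith
  have hsne : s ≠ 0 := ne_of_gt hs0
  have h1sne : (1:ℝ) - s ≠ 0 := by intro h; nlinarith
  have hA : (1-x)⁻¹ * (-1 : ℝ) - x⁻¹ = -(x * (1-x))⁻¹ := by
    field_simp
    ring
  have hB : (1 - s)⁻¹ * (-c) - s⁻¹ * c = -(c * (s * (1-s))⁻¹) := by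
    field_simp
    ring
  rw [hA, hB]
  have key : s * (1-s) = q * (1-q) + c^2 * (x * (1-x)) := by
    rw [hs, hBval, hc]; ring
  have hxx : 0 < x * (1-x) := by nlinarith
  have hss : 0 < s * (1-s) := by nlinarith
  have hlt : c^2 * (x * (1-x)) < s * (1-s) := by
    rw [key]; nlinarith
  have : c * (c * (s * (1-s))⁻¹) < (x * (1-x))⁻¹ := by
    rw [← mul_assoc, ← sq]
    rw [inv_eq_one_div, inv_eq_one_div, mul_one_div, div_lt_div_iff₀ hss hxx]
    nlinarith
  linarith
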